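/- Let ν > 0, let z ∈ ℂ be nonzero, and let 0 < α ≤ π/2. If W is a complex Gaussian random variable CN(0, ν²), then ℙ( |arg((z + W)/z)| ≥ α ) ≤ exp( −|z|²·sin²(α) / (2ν²) ). -/

import Mathlib

open MeasureTheory ProbabilityTheory
open scoped NNReal ENNReal

lemma gaussianPDFReal_eq (v : ℝ≥0) (t : ℝ) :
    gaussianPDFReal 0 v t = (Real.sqrt (2 * Real.pi * v))⁻¹ * Real.exp (-t ^ 2 / (2 * v)) := by
  simp [gaussianPDFReal]

lemma pdf_shift_bound {v : ℝ≥0} (hv : 0 < (v : ℝ)) {x y d e r : ℝ}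
    (h : x ^ 2 + y ^ 2 + r ≤ (x + d) ^ 2 + (y + e) ^ 2) :
    gaussianPDFReal 0 v (x + d) * gaussianPDFReal 0 v (y + e)
      ≤ Real.exp (-r / (2 * v)) * (gaussianPDFReal 0 v x * gaussianPDFReal 0 v y) := by
  simp only [gaussianPDFReal_eq]
  set C := (Real.sqrt (2 * Real.pi * v))⁻¹ with hC
  have hC0 : 0 ≤ C := by positivity
  calc C * Real.exp (-(x + d) ^ 2 / (2 * v)) * (C * Real.exp (-(y + e) ^ 2 / (2 * v)))
      = C ^ 2 * Real.exp (-(x + d) ^ 2 / (2 * v) + -(y + e) ^ 2 / (2 * v)) := by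
        rw [Real.exp_add]; ring
    _ ≤ C ^ 2 * Real.exp (-r / (2 * v) + (-x ^ 2 / (2 * v) + -y ^ 2 / (2 * v))) := by
        refine mul_le_mul_of_nonneg_left (Real.exp_le_exp.mpr ?_) (by positivity)
        rw [← add_div, ← add_div, ← add_div,
          div_le_div_iff_of_pos_right (by positivity)]
        linarith
    _ = Real.exp (-r / (2 * v)) * (C * Real.exp (-x ^ 2 / (2 * v)) * (C * Real.exp (-y ^ 2 / (2 * v)))) := by
        rw [Real.exp_add, Real.exp_add]; ring
open MeasureTheory ProbabilityTheory
open scoped NNReal ENNReal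

lemma gaussianReal_prod_eq (v : ℝ≥0) (hv : v ≠ 0) :
    (gaussianReal 0 v).prod (gaussianReal 0 v)
      = ((volume : Measure ℝ).prod volume).withDensity
          (fun p => gaussianPDF 0 v p.1 * gaussianPDF 0 v p.2) := by
  refine Measure.prod_eq fun s t hs ht => ?_
  rw [withDensity_apply _ (hs.prod ht), ← Measure.prod_restrict,
    lintegral_prod_mul ((measurable_gaussianPDF 0 v).aemeasurable)
      ((measurable_gaussianPDF 0 v).aemeasurable),
    gaussianReal_apply 0 hv s, gaussianReal_apply 0 hv t]

lemma halfplane_bound (v : ℝ≥0) (hv : v ≠ 0) (a b c : ℝ) (hab : a ^ 2 + b ^ 2 = 1)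
    (hc : 0 < c) :
    ((gaussianReal 0 v).prod (gaussianReal 0 v)) {p : ℝ × ℝ | c ≤ a * p.1 + b * p.2}
      ≤ ENNReal.ofReal (Real.exp (-(9 / 16) * c ^ 2 / (2 * (v : ℝ))) / 2) := by
  have hvpos : (0 : ℝ) < v := by
    exact_mod_cast pos_iff_ne_zero.mpr hv
  set g : ℝ → ℝ≥0∞ := gaussianPDF 0 v with hg
  set F : ℝ × ℝ → ℝ≥0∞ := fun p => g p.1 * g p.2 with hF
  have hgm : Measurable g := measurable_gaussianPDF 0 v
  have hFm : Measurable F := (hgm.comp measurable_fst).mul (hgm.comp measurable_snd)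
  have hlin : Measurable fun p : ℝ × ℝ => a * p.1 + b * p.2 :=
    (measurable_fst.const_mul a).add (measurable_snd.const_mul b)
  set S : Set (ℝ × ℝ) := {p | c ≤ a * p.1 + b * p.2} with hS
  have hSm : MeasurableSet S := measurableSet_le measurable_const hlin
  set T : Set (ℝ × ℝ) := {p | c / 4 ≤ a * p.1 + b * p.2} with hT
  have hTm : MeasurableSet T := measurableSet_le measurable_const hlin
  set P : Set (ℝ × ℝ) := {p | 0 < a * p.1 + b * p.2} with hP
  have hPm : MeasurableSet P := measurableSet_lt measurable_const hlin
  set N : Set (ℝ × ℝ) := {p | a * p.1 + b * p.2 < 0} with hN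
  have hNm : MeasurableSet N := measurableSet_lt hlin measurable_const
  set m := (gaussianReal 0 v).prod (gaussianReal 0 v) with hm
  have hmd : m = ((volume : Measure ℝ).prod volume).withDensity F :=
    gaussianReal_prod_eq v hv
  set c' : ℝ := 3 * c / 4 with hc'
  set K := ENNReal.ofReal (Real.exp (-(9 / 16) * c ^ 2 / (2 * (v : ℝ)))) with hK
  -- pointwise bound
  have hpoint : ∀ p : ℝ × ℝ, S.indicator F (p + (c' * a, c' * b)) ≤ K * T.indicator F p := by
    intro p
    by_cases hmem : p + (c' * a, c' * b) ∈ S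
    · rw [Set.indicator_of_mem hmem]
      have hcoord : p + (c' * a, c' * b) = (p.1 + c' * a, p.2 + c' * b) := rfl
      have hmem' : c ≤ a * (p.1 + c' * a) + b * (p.2 + c' * b) := hmem
      have hsum : c / 4 ≤ a * p.1 + b * p.2 := by nlinarith [hmem', hab]
      have hpT : p ∈ T := hsum
      rw [Set.indicator_of_mem hpT]
      have hreal : gaussianPDFReal 0 v (p.1 + c' * a) * gaussianPDFReal 0 v (p.2 + c' * b)
          ≤ Real.exp (-(9 / 16 * c ^ 2) / (2 * v))
            * (gaussianPDFReal 0 v p.1 * gaussianPDFReal 0 v p.2) := by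
        refine pdf_shift_bound hvpos ?_
        nlinarith [hsum, hab, hc]
      calc F (p + (c' * a, c' * b))
          = ENNReal.ofReal (gaussianPDFReal 0 v (p.1 + c' * a)
              * gaussianPDFReal 0 v (p.2 + c' * b)) := by
            rw [hcoord]
            simp only [hF, hg, gaussianPDF]
            rw [ENNReal.ofReal_mul (gaussianPDFReal_nonneg 0 v _)]
        _ ≤ ENNReal.ofReal (Real.exp (-(9 / 16 * c ^ 2) / (2 * v))
              * (gaussianPDFReal 0 v p.1 * gaussianPDFReal 0 v p.2)) :=
            ENNReal.ofReal_le_ofReal hreal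
        _ = K * F p := by
            simp only [hK, hF, hg, gaussianPDF]
            rw [ENNReal.ofReal_mul (Real.exp_nonneg _),
              ENNReal.ofReal_mul (gaussianPDFReal_nonneg 0 v _)]
            ring_nf
    · rw [Set.indicator_of_notMem hmem]
      exact zero_le
  -- symmetry bound : m P ≤ 1/2
  have hneg : (gaussianReal 0 v).map (fun x : ℝ => -x) = gaussianReal 0 v := by
    have h := gaussianReal_map_const_mul (μ := 0) (v := v) (-1)
    have h2 : (fun x : ℝ => -1 * x) = fun x : ℝ => -x := by funext x; ring
    have h3 : (NNReal.mk ((-1 : ℝ) ^ 2) (sq_nonneg _)) = 1 := by ext; norm_num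
    rw [h3, one_mul] at h
    simpa [h2] using h
  have hmapm : m.map (Prod.map (fun x : ℝ => -x) (fun x : ℝ => -x)) = m := by
    rw [hm, ← Measure.map_prod_map _ _ measurable_neg measurable_neg, hneg]
  have hPN : m P = m N := by
    conv_lhs => rw [← hmapm]
    rw [Measure.map_apply (measurable_neg.prodMap measurable_neg) hPm]
    congr 1
    ext p
    simp only [hP, hN, Set.mem_preimage, Set.mem_setOf_eq, Prod.map_fst, Prod.map_snd,
      mul_neg]
    constructor <;> intro h <;> linarith
  have hP12 : m P ≤ 1 / 2 := by
    by_contra hcon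
    push_neg at hcon
    have hdisj : Disjoint P N := by
      rw [Set.disjoint_left]
      intro p hp hn
      have hp' : 0 < a * p.1 + b * p.2 := hp
      have hn' : a * p.1 + b * p.2 < 0 := hn
      linarith
    have hsum : m P + m N = m (P ∪ N) := (measure_union hdisj hNm).symm
    have hle1 : m (P ∪ N) ≤ 1 := prob_le_one
    rw [← hsum, ← hPN] at hle1
    have : (1 : ℝ≥0∞) < m P + m P := by
      calc (1 : ℝ≥0∞) = 1 / 2 + 1 / 2 := (ENNReal.add_halves 1).symm
        _ < m P + m P := ENNReal.add_lt_add hcon hcon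
    exact absurd hle1 (not_le.mpr this)
  -- main chain
  have hTP : T ⊆ P := fun p hp => lt_of_lt_of_le (by positivity : (0:ℝ) < c / 4) hp
  have hmain : m S ≤ K * (1 / 2) := by
    calc m S = ∫⁻ p, S.indicator F p ∂((volume : Measure ℝ).prod volume) := by
          rw [hmd, withDensity_apply _ hSm, lintegral_indicator hSm]
      _ = ∫⁻ p, S.indicator F (p + (c' * a, c' * b)) ∂((volume : Measure ℝ).prod volume) :=
          (lintegral_add_right_eq_self (S.indicator F) (c' * a, c' * b)).symm
      _ ≤ ∫⁻ p, K * T.indicator F p ∂((volume : Measure ℝ).prod volume) :=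
          lintegral_mono hpoint
      _ = K * ∫⁻ p, T.indicator F p ∂((volume : Measure ℝ).prod volume) :=
          lintegral_const_mul' _ _ ENNReal.ofReal_ne_top
      _ = K * m T := by rw [hmd, withDensity_apply _ hTm, lintegral_indicator hTm]
      _ ≤ K * (1 / 2) := by
          gcongr
          exact le_trans (measure_mono hTP) hP12
  refine le_trans hmain (le_of_eq ?_)
  rw [hK, ENNReal.ofReal_div_of_pos (by norm_num : (0:ℝ) < 2), ENNReal.ofReal_ofNat,
    mul_one_div]

lemma rot_im (q : ℂ) (θ : ℝ) :
    (q * Complex.exp ((θ : ℂ) * Complex.I)).im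
      = ‖q‖ * Real.sin (q.arg + θ) := by
  conv_lhs => rw [← Complex.norm_mul_exp_arg_mul_I q]
  rw [mul_assoc, ← Complex.exp_add]
  have h : (q.arg : ℂ) * Complex.I + (θ : ℂ) * Complex.I
      = ((q.arg + θ : ℝ) : ℂ) * Complex.I := by push_cast; ring
  rw [h]
  simp only [Complex.mul_im, Complex.ofReal_re, Complex.ofReal_im,
    Complex.exp_ofReal_mul_I_im, Complex.exp_ofReal_mul_I_re, zero_mul, add_zero, mul_zero]

lemma arg_event_cases (z : ℂ) (hz : z ≠ 0) (α : ℝ) (hα₁ : 0 < α) (hα₂ : α ≤ Real.pi / 2)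
    (W : ℂ) (hp : α ≤ |((z + W) / z).arg|) :
    Real.sin α ≤ (W * (Complex.exp (((-α : ℝ) : ℂ) * Complex.I) / z)).im
    ∨ Real.sin α ≤ (W * (-(Complex.exp (((α : ℝ) : ℂ) * Complex.I) / z))).im := by
  set q := (z + W) / z with hqdef
  have hπ : α ≤ Real.pi := le_trans hα₂ (by linarith [Real.pi_pos])
  have hq1 : q = 1 + W / z := by
    rw [hqdef, add_div, div_self hz]
  rcases le_abs.mp hp with hcase | hcase
  · left
    have h0 : 0 ≤ (q * Complex.exp (((-α : ℝ) : ℂ) * Complex.I)).im := by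
      rw [rot_im]
      refine mul_nonneg (norm_nonneg _) ?_
      refine Real.sin_nonneg_of_nonneg_of_le_pi (by linarith) ?_
      linarith [Complex.arg_le_pi q]
    have hexp : q * Complex.exp (((-α : ℝ) : ℂ) * Complex.I)
        = Complex.exp (((-α : ℝ) : ℂ) * Complex.I)
          + W * (Complex.exp (((-α : ℝ) : ℂ) * Complex.I) / z) := by
      rw [hq1]; ring
    rw [hexp, Complex.add_im, Complex.exp_ofReal_mul_I_im, Real.sin_neg] at h0
    linarith
  · right
    have hcase' : q.arg ≤ -α := by linarith
    have h0 : (q * Complex.exp (((α : ℝ) : ℂ) * Complex.I)).im ≤ 0 := by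
      rw [rot_im]
      have hs : Real.sin (q.arg + α) ≤ 0 := by
        refine Real.sin_nonpos_of_nonpos_of_neg_pi_le (by linarith) ?_
        linarith [Complex.neg_pi_lt_arg q]
      have := mul_le_mul_of_nonneg_left hs (norm_nonneg q)
      simpa using this
    have hexp : q * Complex.exp (((α : ℝ) : ℂ) * Complex.I)
        = Complex.exp (((α : ℝ) : ℂ) * Complex.I)
          + W * (Complex.exp (((α : ℝ) : ℂ) * Complex.I) / z) := by
      rw [hq1]; ring
    rw [hexp, Complex.add_im, Complex.exp_ofReal_mul_I_im] at h0
    rw [mul_neg, Complex.neg_im]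
    linarith


lemma unit_coeffs (z : ℂ) (hz : z ≠ 0) (θ : ℝ) :
    (‖z‖ * (Complex.exp ((θ : ℂ) * Complex.I) / z).im) ^ 2
      + (‖z‖ * (Complex.exp ((θ : ℂ) * Complex.I) / z).re) ^ 2 = 1 := by
  set w := Complex.exp ((θ : ℂ) * Complex.I) / z with hw
  have habs : ‖w‖ = (‖z‖)⁻¹ := by
    rw [hw, norm_div, Complex.norm_exp_ofReal_mul_I, one_div]
  have hz0 : (0:ℝ) < ‖z‖ := by
    simpa [norm_pos_iff] using hz
  have h1 : w.re ^ 2 + w.im ^ 2 = (‖w‖) ^ 2 := by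
    rw [Complex.sq_norm, Complex.normSq_apply]; ring
  have : (‖z‖) ^ 2 * ((‖z‖)⁻¹) ^ 2 = 1 := by
    field_simp
  calc (‖z‖ * w.im) ^ 2 + (‖z‖ * w.re) ^ 2
      = ‖z‖ ^ 2 * (w.re ^ 2 + w.im ^ 2) := by ring
    _ = ‖z‖ ^ 2 * (‖w‖) ^ 2 := by rw [h1]
    _ = ‖z‖ ^ 2 * ((‖z‖)⁻¹) ^ 2 := by rw [habs]
    _ = 1 := this

lemma im_lower (z : ℂ) (hz : z ≠ 0) (W : ℂ) (α : ℝ) (θ : ℝ)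
    (h : Real.sin α ≤ (W * (Complex.exp ((θ : ℂ) * Complex.I) / z)).im) :
    ‖z‖ * Real.sin α
      ≤ (‖z‖ * (Complex.exp ((θ : ℂ) * Complex.I) / z).im) * W.re
        + (‖z‖ * (Complex.exp ((θ : ℂ) * Complex.I) / z).re) * W.im := by
  have hz0 : (0:ℝ) < ‖z‖ := by
    simpa [norm_pos_iff] using hz
  have him : (W * (Complex.exp ((θ : ℂ) * Complex.I) / z)).im
      = W.re * (Complex.exp ((θ : ℂ) * Complex.I) / z).im
        + W.im * (Complex.exp ((θ : ℂ) * Complex.I) / z).re := by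
    rw [Complex.mul_im]
  rw [him] at h
  have := mul_le_mul_of_nonneg_left h (le_of_lt hz0)
  nlinarith [this]


lemma im_lower' (s : ℝ) (hs : 0 ≤ s) (W w : ℂ) (α : ℝ)
    (h : Real.sin α ≤ (W * w).im) :
    s * Real.sin α ≤ (s * w.im) * W.re + (s * w.re) * W.im := by
  have him : (W * w).im = W.re * w.im + W.im * w.re := Complex.mul_im W w
  rw [him] at h
  nlinarith [mul_le_mul_of_nonneg_left h hs]

theorem gaussian_arg_perturbation_tail
    (ν : ℝ) (hν : 0 < ν) (z : ℂ) (hz : z ≠ 0)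
    (α : ℝ) (hα₁ : 0 < α) (hα₂ : α ≤ Real.pi / 2) :
    ((gaussianReal 0 ((ν ^ 2 / 2).toNNReal)).prod (gaussianReal 0 ((ν ^ 2 / 2).toNNReal)))
        {p : ℝ × ℝ | α ≤ |((z + ((p.1 : ℂ) + (p.2 : ℂ) * Complex.I)) / z).arg|}
      ≤ ENNReal.ofReal
          (Real.exp (-(‖z‖ ^ 2 * Real.sin α ^ 2) / (2 * ν ^ 2))) := by
  set v := (ν ^ 2 / 2).toNNReal with hvdef
  have hvpos : 0 < v := Real.toNNReal_pos.mpr (by positivity)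
  have hv : v ≠ 0 := pos_iff_ne_zero.mp hvpos
  have hvr : ((v : ℝ≥0) : ℝ) = ν ^ 2 / 2 := Real.coe_toNNReal _ (by positivity)
  set s := ‖z‖ with hsdef
  have hs : 0 < s := by simpa [hsdef, norm_pos_iff] using hz
  have hsin : 0 < Real.sin α :=
    Real.sin_pos_of_pos_of_lt_pi hα₁ (by linarith [Real.pi_pos])
  set c := s * Real.sin α with hcdef
  have hc : 0 < c := mul_pos hs hsin
  set w₁ := Complex.exp (((-α : ℝ) : ℂ) * Complex.I) / z with hw₁
  set w₂ := -(Complex.exp (((α : ℝ) : ℂ) * Complex.I) / z) with hw₂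
  set a₁ := s * w₁.im with ha₁
  set b₁ := s * w₁.re with hb₁
  set a₂ := s * w₂.im with ha₂
  set b₂ := s * w₂.re with hb₂
  have hab₁ : a₁ ^ 2 + b₁ ^ 2 = 1 := unit_coeffs z hz (-α)
  have hab₂ : a₂ ^ 2 + b₂ ^ 2 = 1 := by
    have h := unit_coeffs z hz α
    rw [ha₂, hb₂, hw₂]
    simp only [Complex.neg_im, Complex.neg_re, mul_neg, neg_sq]
    exact h
  have hsub : {p : ℝ × ℝ | α ≤ |((z + ((p.1 : ℂ) + (p.2 : ℂ) * Complex.I)) / z).arg|}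
      ⊆ {p : ℝ × ℝ | c ≤ a₁ * p.1 + b₁ * p.2} ∪ {p : ℝ × ℝ | c ≤ a₂ * p.1 + b₂ * p.2} := by
    intro p hp
    have hre : ((p.1 : ℂ) + (p.2 : ℂ) * Complex.I).re = p.1 := by simp
    have him : ((p.1 : ℂ) + (p.2 : ℂ) * Complex.I).im = p.2 := by simp
    rcases arg_event_cases z hz α hα₁ hα₂ ((p.1 : ℂ) + (p.2 : ℂ) * Complex.I) hp with h | h
    · left
      have h2 := im_lower' s hs.le ((p.1 : ℂ) + (p.2 : ℂ) * Complex.I) w₁ α h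
      rw [hre, him] at h2
      exact h2
    · right
      have h2 := im_lower' s hs.le ((p.1 : ℂ) + (p.2 : ℂ) * Complex.I) w₂ α h
      rw [hre, him] at h2
      exact h2
  refine le_trans (measure_mono hsub) ?_
  refine le_trans (measure_union_le _ _) ?_
  have hb1 := halfplane_bound v hv a₁ b₁ c hab₁ hc
  have hb2 := halfplane_bound v hv a₂ b₂ c hab₂ hc
  refine le_trans (add_le_add hb1 hb2) ?_
  rw [← ENNReal.ofReal_add (by positivity) (by positivity), add_halves]
  refine ENNReal.ofReal_le_ofReal (Real.exp_le_exp.mpr ?_)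
  rw [hvr, hcdef, div_le_div_iff₀ (by positivity) (by positivity)]
  nlinarith [mul_nonneg (mul_nonneg (sq_nonneg s) (sq_nonneg (Real.sin α))) (sq_nonneg ν)]
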